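/- arXiv:2110.04514 — 2 statements merged into one kernel-verified Lean document; each statement's English description precedes it below -/
import Mathlib

section
/- Let F be 2γ-replacement-stable and satisfy 0 ≤ F(S,o) ≤ λ for all S ∈ O^M and o ∈ O. Then for every δ ∈ (0,1), with probability at least 1 − δ over the draw of the i.i.d. sample S = (Z_1,…,Z_M) ~ μ^M, the generalization gap satisfies R(S) − R_emp(S) ≤ 2γ + (4Mγ + λ)·√(log(1/δ)/(2M)). -/
open MeasureTheory

open Real

private lemma q_pos {p : ℝ} (hp0 : 0 ≤ p) (hp1 : p ≤ 1) (u : ℝ) :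
    0 < 1 - p + p * exp u := by
  rcases eq_or_lt_of_le hp1 with h | h
  · subst h; simpa using exp_pos u
  · have := mul_nonneg hp0 (exp_pos u).le
    linarith

/-- key analytic inequality -/
private lemma phi_le {p : ℝ} (hp0 : 0 ≤ p) (hp1 : p ≤ 1) (u : ℝ) :
    -p * u + log (1 - p + p * exp u) ≤ u ^ 2 / 8 := by
  set q : ℝ → ℝ := fun u => 1 - p + p * exp u with hq
  have hqpos : ∀ u, 0 < q u := fun u => q_pos hp0 hp1 u
  set ψ : ℝ → ℝ := fun u => u ^ 2 / 8 - (-p * u + log (q u)) with hψ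
  set ψ' : ℝ → ℝ := fun u => u / 4 + p - p * exp u / q u with hψ'
  have hd1 : ∀ u, HasDerivAt ψ (ψ' u) u := by
    intro u
    have h1 : HasDerivAt (fun x : ℝ => x ^ 2 / 8) (2 * u ^ (2 - 1) / 8) u :=
      (hasDerivAt_pow 2 u).div_const 8
    have h2 : HasDerivAt (fun u => log (q u)) (p * exp u / q u) u := by
      refine HasDerivAt.log ?_ (hqpos u).ne'
      exact ((Real.hasDerivAt_exp u).const_mul p).const_add (1 - p)
    have h3 : HasDerivAt (fun u : ℝ => -p * u) (-p) u := by
      simpa using (hasDerivAt_id u).const_mul (-p)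
    have hsum := h1.sub (h3.add h2)
    have heq : 2 * u ^ (2 - 1) / 8 - (-p + p * exp u / q u) = ψ' u := by
      simp only [hψ']; push_cast; ring
    exact heq ▸ hsum
  have hd2 : ∀ u, HasDerivAt ψ' (1 / 4 - p * exp u * (1 - p) / (q u) ^ 2) u := by
    intro u
    have h2 : HasDerivAt (fun u => p * exp u) (p * exp u) u :=
      (Real.hasDerivAt_exp u).const_mul p
    have hqd : HasDerivAt q (p * exp u) u := by
      exact ((Real.hasDerivAt_exp u).const_mul p).const_add (1 - p)
    have hdiv : HasDerivAt (fun u => p * exp u / q u)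
        ((p * exp u * q u - p * exp u * (p * exp u)) / (q u) ^ 2) u :=
      h2.div hqd (hqpos u).ne'
    have h1 : HasDerivAt (fun x : ℝ => x / 4 + p) (1 / 4) u := by
      simpa using ((hasDerivAt_id u).div_const 4).add_const p
    have hsum := h1.sub hdiv
    have heq : 1 / 4 - (p * exp u * q u - p * exp u * (p * exp u)) / (q u) ^ 2
        = 1 / 4 - p * exp u * (1 - p) / (q u) ^ 2 := by
      have h4 : p * exp u * q u - p * exp u * (p * exp u) = p * exp u * (1 - p) := by
        simp only [hq]; ring
      rw [h4]
    exact heq ▸ hsum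
  -- second derivative is nonneg: 1/4 ≥ p e^u (1-p)/q^2 by AM-GM
  have hsecond : ∀ u, 0 ≤ 1 / 4 - p * exp u * (1 - p) / (q u) ^ 2 := by
    intro u
    rw [sub_nonneg, div_le_iff₀ (pow_pos (hqpos u) 2)]
    have h5 : q u = (1 - p) + p * exp u := rfl
    nlinarith [sq_nonneg ((1 - p) - p * exp u), hqpos u]
  -- ψ' is monotone
  have hmono : Monotone ψ' :=
    monotone_of_deriv_nonneg (fun u => (hd2 u).differentiableAt)
      (fun u => by rw [(hd2 u).deriv]; exact hsecond u)
  have hψ'0 : ψ' 0 = 0 := by simp [hψ', hq]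
  -- ψ u ≥ ψ 0 = 0 for all u
  have hψ0 : ψ 0 = 0 := by simp [hψ, hq]
  have key : ∀ u, 0 ≤ ψ u := by
    intro u
    rcases le_total 0 u with hu | hu
    · have hm : MonotoneOn ψ (Set.Ici 0) := by
        refine monotoneOn_of_deriv_nonneg (convex_Ici 0)
          (fun x _ => (hd1 x).continuousAt.continuousWithinAt)
          (fun x _ => (hd1 x).differentiableAt.differentiableWithinAt) ?_
        intro x hx
        rw [(hd1 x).deriv]
        rw [interior_Ici] at hx
        have : (0:ℝ) ≤ ψ' x := hψ'0 ▸ hmono (le_of_lt hx)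
        exact this
      have := hm (Set.mem_Ici.2 le_rfl) (Set.mem_Ici.2 hu) hu
      linarith [hψ0 ▸ this]
    · have hm : AntitoneOn ψ (Set.Iic 0) := by
        refine antitoneOn_of_deriv_nonpos (convex_Iic 0)
          (fun x _ => (hd1 x).continuousAt.continuousWithinAt)
          (fun x _ => (hd1 x).differentiableAt.differentiableWithinAt) ?_
        intro x hx
        rw [(hd1 x).deriv]
        rw [interior_Iic] at hx
        have : ψ' x ≤ 0 := hψ'0 ▸ hmono (le_of_lt hx)
        exact this
      have := hm (Set.mem_Iic.2 hu) (Set.mem_Iic.2 le_rfl) hu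
      linarith [hψ0 ▸ this]
  have := key u
  simp only [hψ] at this
  linarith

/-- Hoeffding chord bound, exponential form. -/
private lemma chord_le {p : ℝ} (hp0 : 0 ≤ p) (hp1 : p ≤ 1) (u : ℝ) :
    (1 - p) * exp (-p * u) + p * exp ((1 - p) * u) ≤ exp (u ^ 2 / 8) := by
  have h1 : (1 - p) * exp (-p * u) + p * exp ((1 - p) * u)
      = exp (-p * u) * (1 - p + p * exp u) := by
    have he : exp ((1 - p) * u) = exp (-p * u) * exp u := by
      rw [← Real.exp_add]; ring_nf
    rw [he]; ring
  rw [h1]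
  have h2 : exp (-p * u) * (1 - p + p * exp u)
      = exp (-p * u + log (1 - p + p * exp u)) := by
    rw [Real.exp_add, Real.exp_log (q_pos hp0 hp1 u)]
  rw [h2]
  exact Real.exp_le_exp.2 (phi_le hp0 hp1 u)

open MeasureTheory

private lemma integrable_of_abs_le {α : Type*} [MeasurableSpace α] {ν : Measure α}
    [IsFiniteMeasure ν] {f : α → ℝ} (hf : AEStronglyMeasurable f ν) (C : ℝ)
    (hC : ∀ x, |f x| ≤ C) : Integrable f ν :=
  Integrable.mono' (integrable_const C) hf (Filter.Eventually.of_forall fun x => by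
    simpa using hC x)

/-- Hoeffding's lemma for a centered bounded random variable. -/
private lemma hoeffding_lemma {α : Type*} [MeasurableSpace α] (ν : Measure α)
    [IsProbabilityMeasure ν] {f : α → ℝ} (hf : Measurable f) {a b : ℝ}
    (hab : ∀ x, f x ∈ Set.Icc a b) (hmean : ∫ x, f x ∂ν = 0) (h : ℝ) :
    ∫ x, exp (h * f x) ∂ν ≤ exp (h ^ 2 * (b - a) ^ 2 / 8) := by
  have hnea : Nonempty α := by
    by_contra hne
    have h1 : (ν Set.univ) = 1 := measure_univ
    rw [Set.univ_eq_empty_iff.2 (not_nonempty_iff.1 hne), measure_empty] at h1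
    exact zero_ne_one h1
  obtain ⟨x0⟩ := hnea
  have hale : a ≤ b := le_trans (hab x0).1 (hab x0).2
  have hintf : Integrable f ν :=
    integrable_of_abs_le hf.aestronglyMeasurable (max |a| |b|)
      (fun x => abs_le_max_abs_abs (hab x).1 (hab x).2)
  have ha0 : a ≤ 0 := by
    have : ∫ x, f x ∂ν ≥ ∫ _x, a ∂ν := integral_mono (integrable_const a) hintf fun x => (hab x).1
    simpa [hmean] using this
  have hb0 : 0 ≤ b := by
    have : ∫ x, f x ∂ν ≤ ∫ _x, b ∂ν := integral_mono hintf (integrable_const b) fun x => (hab x).2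
    simpa [hmean] using this
  rcases eq_or_lt_of_le hale with heq | hlt
  · -- a = b forces f ≡ 0
    have ha : a = 0 := le_antisymm ha0 (heq ▸ hb0)
    have hfb : ∀ x, f x = 0 := fun x => le_antisymm (ha ▸ heq ▸ (hab x).2) (ha ▸ (hab x).1)
    simp [hfb, ← heq, ha]
  -- main case a < b
  have hba : 0 < b - a := sub_pos.2 hlt
  set p : ℝ := -a / (b - a) with hp
  have hp0 : 0 ≤ p := div_nonneg (neg_nonneg.2 ha0) hba.le
  have hp1 : p ≤ 1 := by
    rw [hp, div_le_one hba]; linarith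
  set u : ℝ := h * (b - a) with hu
  -- pointwise chord bound
  have hchord : ∀ x, exp (h * f x) ≤
      (b - f x) / (b - a) * exp (h * a) + (f x - a) / (b - a) * exp (h * b) := by
    intro x
    have w1 : (0:ℝ) ≤ (b - f x) / (b - a) := div_nonneg (by linarith [(hab x).2]) hba.le
    have w2 : (0:ℝ) ≤ (f x - a) / (b - a) := div_nonneg (by linarith [(hab x).1]) hba.le
    have hw : (b - f x) / (b - a) + (f x - a) / (b - a) = 1 := by field_simp; ring
    have hcvx := convexOn_exp.2 (Set.mem_univ (h * a)) (Set.mem_univ (h * b)) w1 w2 hw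
    have harg : (b - f x) / (b - a) * (h * a) + (f x - a) / (b - a) * (h * b) = h * f x := by
      field_simp; ring
    simpa [smul_eq_mul, harg] using hcvx
  have hint1 : Integrable (fun x => exp (h * f x)) ν := by
    refine integrable_of_abs_le (Real.measurable_exp.comp (hf.const_mul h)).aestronglyMeasurable (exp (|h| * max |a| |b|)) fun x => ?_
    rw [abs_of_pos (exp_pos _)]
    apply Real.exp_le_exp.2
    calc h * f x ≤ |h * f x| := le_abs_self _
    _ = |h| * |f x| := abs_mul _ _
    _ ≤ |h| * max |a| |b| := by
        exact mul_le_mul_of_nonneg_left (abs_le_max_abs_abs (hab x).1 (hab x).2) (abs_nonneg h)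
  have hA : Integrable (fun x => (b - f x) / (b - a) * exp (h * a)) ν := by
    have := (((integrable_const b).sub hintf).div_const (b - a)).mul_const (exp (h * a))
    simpa using this
  have hB : Integrable (fun x => (f x - a) / (b - a) * exp (h * b)) ν := by
    have := ((hintf.sub (integrable_const a)).div_const (b - a)).mul_const (exp (h * b))
    simpa using this
  have hint2 : Integrable
      (fun x => (b - f x) / (b - a) * exp (h * a) + (f x - a) / (b - a) * exp (h * b)) ν :=
    hA.add hB
  have hstep := integral_mono hint1 hint2 hchord
  have hrhs : ∫ x, ((b - f x) / (b - a) * exp (h * a) + (f x - a) / (b - a) * exp (h * b)) ∂ν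
      = (1 - p) * exp (-p * u) + p * exp ((1 - p) * u) := by
    rw [integral_add hA hB]
    rw [integral_mul_const, integral_mul_const, integral_div, integral_div,
      integral_sub (integrable_const b) hintf, integral_sub hintf (integrable_const a),
      hmean, integral_const]
    simp only [measure_univ, integral_const, probReal_univ, ENNReal.toReal_one, one_smul, sub_zero, zero_sub]
    have e1 : -p * u = h * a := by rw [hp, hu]; field_simp
    have e2 : (1 - p) * u = h * b := by rw [hp, hu]; field_simp; ring
    rw [e1, e2, hp]
    field_simp
    ring
  have hfinal : (1 - p) * exp (-p * u) + p * exp ((1 - p) * u) ≤ exp (u ^ 2 / 8) :=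
    chord_le hp0 hp1 u
  have hu2 : u ^ 2 / 8 = h ^ 2 * (b - a) ^ 2 / 8 := by rw [hu]; ring
  calc ∫ x, exp (h * f x) ∂ν ≤ _ := hstep
  _ = (1 - p) * exp (-p * u) + p * exp ((1 - p) * u) := hrhs
  _ ≤ exp (u ^ 2 / 8) := hfinal
  _ = exp (h ^ 2 * (b - a) ^ 2 / 8) := by rw [hu2]

private lemma insertNth_update {n : ℕ} {γ : Type*} (p : Fin (n + 1)) (x : γ) (f : Fin n → γ)
    (m : Fin n) (o' : γ) :
    (p.insertNth x (Function.update f m o') : Fin (n + 1) → γ)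
      = Function.update (β := fun _ : Fin (n + 1) => γ) (p.insertNth x f : Fin (n + 1) → γ)
          (p.succAbove m) o' := by
  ext i
  refine Fin.succAboveCases p ?_ ?_ i
  · simp [Function.update_apply, (Fin.succAbove_ne p m).symm]
  · intro j
    simp [Function.update_apply, Fin.succAbove_right_inj]

private lemma nonempty_of_prob {α : Type*} [MeasurableSpace α] (ν : Measure α)
    [IsProbabilityMeasure ν] : Nonempty α := by
  by_contra hne
  have h1 : (ν Set.univ) = 1 := measure_univ
  rw [Set.univ_eq_empty_iff.2 (not_nonempty_iff.1 hne), measure_empty] at h1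
  exact zero_ne_one h1

/-- McDiarmid mgf bound by induction on the number of coordinates. -/
private lemma mgf_pi_bound {O : Type*} [MeasurableSpace O] (μ : Measure O)
    [IsProbabilityMeasure μ] :
    ∀ (n : ℕ) (c h B : ℝ) (g : (Fin n → O) → ℝ), Measurable g → (∀ S, |g S| ≤ B) →
    (∀ (S : Fin n → O) (m : Fin n) (o' : O), |g S - g (Function.update S m o')| ≤ c) →
    ∫ S, exp (h * (g S - ∫ T, g T ∂(Measure.pi fun _ : Fin n => μ)))
        ∂(Measure.pi fun _ : Fin n => μ)
      ≤ exp (h ^ 2 * n * c ^ 2 / 8) := by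
  have hO : Nonempty O := nonempty_of_prob μ
  intro n
  induction n with
  | zero =>
    intro c h B g hg hB hdiff
    haveI : Subsingleton (Fin 0 → O) := ⟨fun a b => funext fun i => i.elim0⟩
    have hconst : ∀ S : Fin 0 → O, (∫ T, g T ∂(Measure.pi fun _ : Fin 0 => μ)) = g S := by
      intro S
      have hgc : g = fun _ => g S := funext fun T => congrArg g (Subsingleton.elim T S)
      rw [hgc, integral_const]; simp
    have : ∫ S, exp (h * (g S - ∫ T, g T ∂(Measure.pi fun _ : Fin 0 => μ)))
        ∂(Measure.pi fun _ : Fin 0 => μ) = 1 := by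
      rw [show (fun S : Fin 0 → O => exp (h * (g S - ∫ T, g T ∂(Measure.pi fun _ : Fin 0 => μ))))
          = fun _ => 1 from funext fun S => by rw [hconst S]; simp]
      simp
    rw [this]
    have : (0:ℝ) ≤ h ^ 2 * (0:ℕ) * c ^ 2 / 8 := by norm_num
    calc (1:ℝ) = exp 0 := by simp
    _ ≤ exp (h ^ 2 * (0:ℕ) * c ^ 2 / 8) := exp_le_exp.2 (by norm_num)
  | succ n ih =>
    intro c h B g hg hB hdiff
    set π' := (Measure.pi fun _ : Fin n => μ) with hπ'
    set πs := (Measure.pi fun _ : Fin (n + 1) => μ) with hπs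
    set e := MeasurableEquiv.piFinSuccAbove (fun _ : Fin (n + 1) => O) 0 with he
    have mp : MeasurePreserving e πs (μ.prod π') :=
      measurePreserving_piFinSuccAbove (fun _ : Fin (n + 1) => μ) 0
    set I := ∫ T, g T ∂πs with hI
    set G : O → (Fin n → O) → ℝ := fun x r => g ((0 : Fin (n + 1)).insertNth x r) with hG
    have hesymm : ∀ p : O × (Fin n → O), e.symm p = (0 : Fin (n + 1)).insertNth p.1 p.2 := by
      intro p; rfl
    have hGmeas : Measurable (fun p : O × (Fin n → O) => G p.1 p.2) := by
      have : (fun p : O × (Fin n → O) => G p.1 p.2) = g ∘ e.symm := by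
        ext p; simp [hG, hesymm]
      rw [this]; exact hg.comp e.symm.measurable
    have hGB : ∀ x r, |G x r| ≤ B := fun x r => hB _
    have hB0 : 0 ≤ B := le_trans (abs_nonneg _) (hB (Classical.arbitrary _))
    -- bounded difference in the first coordinate
    have hGfirst : ∀ x x' r, |G x r - G x' r| ≤ c := by
      intro x x' r
      have h0 := hdiff ((0 : Fin (n + 1)).insertNth x r) 0 x'
      rw [Fin.update_insertNth] at h0
      simpa [hG] using h0
    -- bounded difference in the remaining coordinates
    have hGrest : ∀ x r m o', |G x r - G x (Function.update r m o')| ≤ c := by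
      intro x r m o'
      have h0 := hdiff ((0 : Fin (n + 1)).insertNth x r) ((0 : Fin (n + 1)).succAbove m) o'
      rw [← insertNth_update] at h0
      simpa [hG] using h0
    set gbar : (Fin n → O) → ℝ := fun r => ∫ x, G x r ∂μ with hgbar
    have hgbar_meas : Measurable gbar := by
      have := (hGmeas.stronglyMeasurable).integral_prod_left' (μ := μ)
      exact this.measurable
    have hGxmeas : ∀ r, Measurable fun x => G x r := fun r =>
      hGmeas.comp (measurable_id.prodMk measurable_const)
    have hGrmeas : ∀ x, Measurable fun r => G x r := fun x =>
      hGmeas.comp (measurable_const.prodMk measurable_id)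
    have hGint : ∀ r, Integrable (fun x => G x r) μ := fun r =>
      integrable_of_abs_le (hGxmeas r).aestronglyMeasurable B (fun x => hGB x r)
    have hgbarB : ∀ r, |gbar r| ≤ B := by
      intro r
      have := norm_integral_le_of_norm_le_const (μ := μ) (f := fun x => G x r) (C := B)
        (Filter.Eventually.of_forall fun x => by simpa using hGB x r)
      simpa [hgbar] using this
    have hgbar_diff : ∀ (r : Fin n → O) (m : Fin n) (o' : O),
        |gbar r - gbar (Function.update r m o')| ≤ c := by
      intro r m o'
      have hsub : gbar r - gbar (Function.update r m o')
          = ∫ x, (G x r - G x (Function.update r m o')) ∂μ := by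
        rw [integral_sub (hGint r) (hGint _)]
      rw [hsub]
      have := norm_integral_le_of_norm_le_const (μ := μ)
        (f := fun x => G x r - G x (Function.update r m o')) (C := c)
        (Filter.Eventually.of_forall fun x => by simpa using hGrest x r m o')
      simpa using this
    have hIbar : ∫ r, gbar r ∂π' = I := by
      have h1 : ∫ p, g (e.symm p) ∂(μ.prod π') = I := (MeasurePreserving.symm e mp).integral_comp' g
      have h2 : ∫ p, g (e.symm p) ∂(μ.prod π') = ∫ r, ∫ x, g (e.symm (x, r)) ∂μ ∂π' := by
        apply integral_prod_symm
        exact integrable_of_abs_le ((hg.comp e.symm.measurable).aestronglyMeasurable) B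
          (fun p => hB _)
      rw [← h1, h2]
      rfl
    -- inner bound for fixed r
    have hinner : ∀ r, ∫ x, exp (h * (G x r - I)) ∂μ
        ≤ exp (h ^ 2 * c ^ 2 / 8) * exp (h * (gbar r - I)) := by
      intro r
      have hsplit : ∀ x, exp (h * (G x r - I))
          = exp (h * (G x r - gbar r)) * exp (h * (gbar r - I)) := by
        intro x; rw [← Real.exp_add]; ring_nf
      set A := sInf (Set.range fun x => G x r) with hA
      have hbdd : BddBelow (Set.range fun x => G x r) :=
        ⟨-B, fun y ⟨x, hx⟩ => hx ▸ neg_le_of_abs_le (hGB x r)⟩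
      have hne : (Set.range fun x => G x r).Nonempty := Set.range_nonempty _
      have hlow : ∀ x, A ≤ G x r := fun x => csInf_le hbdd (Set.mem_range_self x)
      have hhigh : ∀ x, G x r ≤ A + c := by
        intro x
        have : G x r - c ≤ A := by
          apply le_csInf hne
          rintro y ⟨x', rfl⟩
          have := hGfirst x x' r
          have := abs_le.1 this
          linarith [this.1, this.2]
        linarith
      have hmean : ∫ x, (G x r - gbar r) ∂μ = 0 := by
        rw [integral_sub (hGint r) (integrable_const _), integral_const]
        simp [hgbar]
      have hicc : ∀ x, G x r - gbar r ∈ Set.Icc (A - gbar r) (A + c - gbar r) := by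
        intro x
        exact ⟨by linarith [hlow x], by linarith [hhigh x]⟩
      have hhoeff := hoeffding_lemma μ ((hGxmeas r).sub measurable_const) hicc hmean h
      have hwidth : (A + c - gbar r - (A - gbar r)) = c := by ring
      rw [hwidth] at hhoeff
      calc ∫ x, exp (h * (G x r - I)) ∂μ
          = ∫ x, exp (h * (G x r - gbar r)) * exp (h * (gbar r - I)) ∂μ := by
            exact integral_congr_ae (Filter.Eventually.of_forall fun x => hsplit x)
        _ = (∫ x, exp (h * (G x r - gbar r)) ∂μ) * exp (h * (gbar r - I)) := by
            rw [integral_mul_const]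
        _ ≤ exp (h ^ 2 * c ^ 2 / 8) * exp (h * (gbar r - I)) := by
            exact mul_le_mul_of_nonneg_right hhoeff (exp_pos _).le
    -- putting it together
    have hIabs : |I| ≤ B := by
      have := norm_integral_le_of_norm_le_const (μ := πs) (f := g) (C := B)
        (Filter.Eventually.of_forall fun T => by simpa using hB T)
      simpa [hI] using this
    have hexp_bound : ∀ (y : ℝ), |y| ≤ B → exp (h * (y - I)) ≤ exp (|h| * (2 * B)) := by
      intro y hy
      apply exp_le_exp.2
      calc h * (y - I) ≤ |h * (y - I)| := le_abs_self _
      _ = |h| * |y - I| := abs_mul _ _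
      _ ≤ |h| * (2 * B) := by
          apply mul_le_mul_of_nonneg_left _ (abs_nonneg h)
          calc |y - I| ≤ |y| + |I| := abs_sub _ _
          _ ≤ 2 * B := by linarith
    have hint_pi : Integrable (fun S => exp (h * (g S - I))) πs :=
      integrable_of_abs_le ((Real.measurable_exp.comp ((hg.sub measurable_const).const_mul h)).aestronglyMeasurable)
        (exp (|h| * (2 * B))) (fun S => by
          rw [abs_of_pos (exp_pos _)]; exact hexp_bound _ (hB S))
    have hint_prod : Integrable (fun p : O × (Fin n → O) => exp (h * (G p.1 p.2 - I)))
        (μ.prod π') :=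
      integrable_of_abs_le ((Real.measurable_exp.comp ((hGmeas.sub measurable_const).const_mul h)).aestronglyMeasurable)
        (exp (|h| * (2 * B))) (fun p => by
          rw [abs_of_pos (exp_pos _)]; exact hexp_bound _ (hGB p.1 p.2))
    have step1 : ∫ S, exp (h * (g S - I)) ∂πs
        = ∫ r, ∫ x, exp (h * (G x r - I)) ∂μ ∂π' := by
      have h1 : ∫ S, exp (h * (g S - I)) ∂πs
          = ∫ p, exp (h * (g (e.symm p) - I)) ∂(μ.prod π') :=
        ((MeasurePreserving.symm e mp).integral_comp' fun S => exp (h * (g S - I))).symm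
      rw [h1]
      exact integral_prod_symm _ hint_prod
    have hinner_meas : StronglyMeasurable fun r => ∫ x, exp (h * (G x r - I)) ∂μ := by
      exact ((Real.measurable_exp.comp ((hGmeas.sub measurable_const).const_mul h)).stronglyMeasurable).integral_prod_left'
    have hint_inner : Integrable (fun r => ∫ x, exp (h * (G x r - I)) ∂μ) π' := by
      refine integrable_of_abs_le hinner_meas.aestronglyMeasurable (exp (|h| * (2 * B))) ?_
      intro r
      have h1 := norm_integral_le_of_norm_le_const (μ := μ)
        (f := fun x => exp (h * (G x r - I))) (C := exp (|h| * (2 * B)))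
        (Filter.Eventually.of_forall fun x => by
          rw [Real.norm_eq_abs, abs_of_pos (exp_pos _)]; exact hexp_bound _ (hGB x r))
      simpa using h1
    have hint_gbar_exp : Integrable (fun r => exp (h * (gbar r - I))) π' :=
      integrable_of_abs_le ((Real.measurable_exp.comp ((hgbar_meas.sub measurable_const).const_mul h)).aestronglyMeasurable)
        (exp (|h| * (2 * B))) (fun r => by
          rw [abs_of_pos (exp_pos _)]; exact hexp_bound _ (hgbarB r))
    have step2 : ∫ r, ∫ x, exp (h * (G x r - I)) ∂μ ∂π'
        ≤ ∫ r, exp (h ^ 2 * c ^ 2 / 8) * exp (h * (gbar r - I)) ∂π' :=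
      integral_mono hint_inner (hint_gbar_exp.const_mul _) (fun r => hinner r)
    have step3 : ∫ r, exp (h ^ 2 * c ^ 2 / 8) * exp (h * (gbar r - I)) ∂π'
        = exp (h ^ 2 * c ^ 2 / 8) * ∫ r, exp (h * (gbar r - I)) ∂π' :=
      integral_const_mul _ _
    have step4 : ∫ r, exp (h * (gbar r - I)) ∂π' ≤ exp (h ^ 2 * n * c ^ 2 / 8) := by
      have := ih c h B gbar hgbar_meas hgbarB hgbar_diff
      rwa [hIbar] at this
    calc ∫ S, exp (h * (g S - I)) ∂πs
        = ∫ r, ∫ x, exp (h * (G x r - I)) ∂μ ∂π' := step1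
      _ ≤ ∫ r, exp (h ^ 2 * c ^ 2 / 8) * exp (h * (gbar r - I)) ∂π' := step2
      _ = exp (h ^ 2 * c ^ 2 / 8) * ∫ r, exp (h * (gbar r - I)) ∂π' := step3
      _ ≤ exp (h ^ 2 * c ^ 2 / 8) * exp (h ^ 2 * n * c ^ 2 / 8) :=
          mul_le_mul_of_nonneg_left step4 (exp_pos _).le
      _ = exp (h ^ 2 * (n + 1 : ℕ) * c ^ 2 / 8) := by
          rw [← Real.exp_add]; congr 1; push_cast; ring

private lemma measurable_update_pair {O : Type*} [MeasurableSpace O] {M : ℕ} (m : Fin M) :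
    Measurable (fun p : (Fin M → O) × O => Function.update p.1 m p.2) := by
  apply measurable_pi_lambda
  intro i
  rcases eq_or_ne i m with rfl | hne
  · simpa [Function.update_self] using (measurable_snd :
      Measurable fun p : (Fin M → O) × O => p.2)
  · have : (fun p : (Fin M → O) × O => Function.update p.1 m p.2 i)
        = fun p : (Fin M → O) × O => p.1 i := by
      ext p; simp [Function.update_apply, hne]
    rw [this]
    exact (measurable_pi_apply i).comp measurable_fst

private lemma measurePreserving_update {O : Type*} [MeasurableSpace O] (μ : Measure O)
    [IsProbabilityMeasure μ] {M : ℕ} (m : Fin M) :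
    MeasurePreserving (fun p : (Fin M → O) × O => Function.update p.1 m p.2)
      ((Measure.pi fun _ : Fin M => μ).prod μ) (Measure.pi fun _ : Fin M => μ) := by
  refine ⟨measurable_update_pair m, ?_⟩
  refine (Measure.pi_eq (μ := fun _ : Fin M => μ) fun s hs => ?_).symm
  rw [Measure.map_apply (measurable_update_pair m) (MeasurableSet.univ_pi hs)]
  have hpre : (fun p : (Fin M → O) × O => Function.update p.1 m p.2) ⁻¹'
      (Set.pi Set.univ s)
      = (Set.pi Set.univ (Function.update s m Set.univ)) ×ˢ (s m) := by
    ext ⟨S, o⟩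
    simp only [Set.mem_preimage, Set.mem_pi, Set.mem_univ, forall_true_left, Set.mem_prod]
    constructor
    · intro hall
      refine ⟨fun i => ?_, by simpa using hall m⟩
      rcases eq_or_ne i m with rfl | hne
      · simp [Function.update_self]
      · have := hall i
        simpa [Function.update_apply, hne] using this
    · rintro ⟨h1, h2⟩ i
      rcases eq_or_ne i m with rfl | hne
      · simpa using h2
      · have := h1 i
        simpa [Function.update_apply, hne] using this
  rw [hpre, Measure.prod_prod, Measure.pi_pi]
  have hprod : (∏ i, μ (Function.update s m Set.univ i))
      = ∏ i ∈ Finset.univ.erase m, μ (s i) := by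
    have : (fun i => μ (Function.update s m Set.univ i))
        = Function.update (fun i => μ (s i)) m (μ Set.univ) := by
      ext i
      rcases eq_or_ne i m with rfl | hne
      · simp
      · simp [Function.update_apply, hne]
    rw [this, Finset.prod_update_of_mem (Finset.mem_univ m)]
    rw [measure_univ, one_mul, Finset.sdiff_singleton_eq_erase]
  rw [hprod, ← Finset.prod_erase_mul Finset.univ _ (Finset.mem_univ m)]

open ProbabilityTheory

/-- high-probability generalization bound for a 2γ-replacement-stable,
bounded expected-loss function `F`. -/
theorem stability_generalization_high_prob
    {O : Type*} [MeasurableSpace O] (μ : Measure O) [IsProbabilityMeasure μ]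
    (M : ℕ) (hM : 1 ≤ M)
    (F : (Fin M → O) → O → ℝ) (hF : Measurable (Function.uncurry F))
    (γ lam : ℝ) (hγ : 0 ≤ γ)
    (hstab : ∀ (S : Fin M → O) (m : Fin M) (o' o : O),
      |F S o - F (Function.update S m o') o| ≤ 2 * γ)
    (hF0 : ∀ S o, 0 ≤ F S o) (hFlam : ∀ S o, F S o ≤ lam)
    (δ : ℝ) (hδ0 : 0 < δ) (hδ1 : δ < 1) :
    ENNReal.ofReal (1 - δ) ≤
      (Measure.pi fun _ : Fin M => μ)
        {S | (∫ o, F S o ∂μ) - (1 / (M : ℝ)) * ∑ m : Fin M, F S (S m)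
            ≤ 2 * γ + (4 * M * γ + lam) * Real.sqrt (Real.log (1 / δ) / (2 * M))} := by
  have hO : Nonempty O := nonempty_of_prob μ
  set Pi := (Measure.pi fun _ : Fin M => μ) with hPi
  have hM0 : (0:ℝ) < (M:ℝ) := by exact_mod_cast Nat.lt_of_lt_of_le Nat.zero_lt_one hM
  have hlam0 : 0 ≤ lam := le_trans (hF0 (Classical.arbitrary _) (Classical.arbitrary _))
    (hFlam _ _)
  set g : (Fin M → O) → ℝ :=
    fun S => (∫ o, F S o ∂μ) - (1 / (M : ℝ)) * ∑ m : Fin M, F S (S m) with hg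
  -- measurability of components
  have hFS : ∀ S, Measurable (F S) := fun S =>
    hF.comp (measurable_const.prodMk measurable_id)
  have hFintS : ∀ S, Integrable (F S) μ := fun S =>
    integrable_of_abs_le (hFS S).aestronglyMeasurable lam
      (fun o => abs_le.2 ⟨by linarith [hF0 S o], hFlam S o⟩)
  have hRmeas : Measurable fun S => ∫ o, F S o ∂μ :=
    (hF.stronglyMeasurable.integral_prod_right' (ν := μ)).measurable
  have hFm : ∀ m : Fin M, Measurable fun S => F S (S m) := fun m =>
    hF.comp (measurable_id.prodMk (measurable_pi_apply m))
  have hEmeas : Measurable fun S => (1 / (M : ℝ)) * ∑ m : Fin M, F S (S m) :=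
    (Finset.measurable_sum Finset.univ fun m _ => hFm m).const_mul _
  have hgmeas : Measurable g := hRmeas.sub hEmeas
  -- bounds on R and Remp
  have hRbd : ∀ S, (∫ o, F S o ∂μ) ∈ Set.Icc (0:ℝ) lam := by
    intro S
    constructor
    · exact integral_nonneg fun o => hF0 S o
    · calc ∫ o, F S o ∂μ ≤ ∫ _o, lam ∂μ :=
        integral_mono (hFintS S) (integrable_const _) fun o => hFlam S o
      _ = lam := by simp
  have hEbd : ∀ S, ((1 / (M : ℝ)) * ∑ m : Fin M, F S (S m)) ∈ Set.Icc (0:ℝ) lam := by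
    intro S
    constructor
    · apply mul_nonneg (by positivity)
      exact Finset.sum_nonneg fun m _ => hF0 S (S m)
    · have hsum : (∑ m : Fin M, F S (S m)) ≤ (M:ℝ) * lam := by
        calc (∑ m : Fin M, F S (S m)) ≤ ∑ _m : Fin M, lam :=
          Finset.sum_le_sum fun m _ => hFlam S (S m)
        _ = (M:ℝ) * lam := by simp [mul_comm]
      calc (1 / (M : ℝ)) * ∑ m : Fin M, F S (S m) ≤ (1 / (M : ℝ)) * ((M:ℝ) * lam) := by
            apply mul_le_mul_of_nonneg_left hsum (by positivity)
      _ = lam := by field_simp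
  have hgB : ∀ S, |g S| ≤ lam := by
    intro S
    rw [hg]
    have h1 := hRbd S
    have h2 := hEbd S
    rw [abs_le]
    constructor <;> simp only [] <;> [linarith [h1.1, h2.2]; linarith [h1.2, h2.1]]
  -- bounded differences
  set c : ℝ := 4 * γ + lam / M with hc
  have hc0 : 0 ≤ c := by positivity
  have hgdiff : ∀ (S : Fin M → O) (m : Fin M) (o' : O),
      |g S - g (Function.update S m o')| ≤ c := by
    intro S m o'
    set S' := Function.update S m o' with hS'
    have hR : |(∫ o, F S o ∂μ) - (∫ o, F S' o ∂μ)| ≤ 2 * γ := by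
      have hsub : (∫ o, F S o ∂μ) - (∫ o, F S' o ∂μ) = ∫ o, (F S o - F S' o) ∂μ := by
        rw [integral_sub (hFintS S) (hFintS S')]
      rw [hsub]
      have := norm_integral_le_of_norm_le_const (μ := μ) (f := fun o => F S o - F S' o)
        (C := 2 * γ) (Filter.Eventually.of_forall fun o => by
          simpa using hstab S m o' o)
      simpa using this
    have hterm : ∀ m' : Fin M, |F S (S m') - F S' (S' m')|
        ≤ 2 * γ + (if m' = m then lam else 0) := by
      intro m'
      rcases eq_or_ne m' m with rfl | hne
      · simp only [if_pos rfl]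
        have e1 : S' m' = o' := by rw [hS']; simp
        rw [e1]
        calc |F S (S m') - F S' o'|
            ≤ |F S (S m') - F S' (S m')| + |F S' (S m') - F S' o'| := abs_sub_le _ _ _
          _ ≤ 2 * γ + lam := by
              have h1 := hstab S m' o' (S m')
              have h2 : |F S' (S m') - F S' o'| ≤ lam := by
                rw [abs_le]
                constructor
                · linarith [hF0 S' (S m'), hFlam S' o']
                · linarith [hF0 S' o', hFlam S' (S m')]
              linarith
      · have e1 : S' m' = S m' := by rw [hS']; simp [Function.update_apply, hne]
        rw [e1, if_neg hne, add_zero]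
        exact hstab S m o' (S m')
    have hsumB : |(∑ m' : Fin M, F S (S m')) - ∑ m' : Fin M, F S' (S' m')|
        ≤ 2 * γ * M + lam := by
      rw [← Finset.sum_sub_distrib]
      calc |∑ m' : Fin M, (F S (S m') - F S' (S' m'))|
          ≤ ∑ m' : Fin M, |F S (S m') - F S' (S' m')| := Finset.abs_sum_le_sum_abs _ _
        _ ≤ ∑ m' : Fin M, (2 * γ + (if m' = m then lam else 0)) :=
            Finset.sum_le_sum fun m' _ => hterm m'
        _ = 2 * γ * M + lam := by
            rw [Finset.sum_add_distrib, Finset.sum_const, Finset.sum_ite_eq' Finset.univ m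
              (fun _ => lam)]
            simp [mul_comm]
    have hE : |(1 / (M : ℝ)) * (∑ m' : Fin M, F S (S m'))
        - (1 / (M : ℝ)) * ∑ m' : Fin M, F S' (S' m')| ≤ 2 * γ + lam / M := by
      rw [← mul_sub, abs_mul, abs_of_pos (by positivity : (0:ℝ) < 1 / (M:ℝ))]
      calc (1 / (M:ℝ)) * |(∑ m' : Fin M, F S (S m')) - ∑ m' : Fin M, F S' (S' m')|
          ≤ (1 / (M:ℝ)) * (2 * γ * M + lam) :=
            mul_le_mul_of_nonneg_left hsumB (by positivity)
        _ = 2 * γ + lam / M := by field_simp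
    calc |g S - g S'| = |((∫ o, F S o ∂μ) - (∫ o, F S' o ∂μ))
          - ((1 / (M : ℝ)) * (∑ m' : Fin M, F S (S m'))
            - (1 / (M : ℝ)) * ∑ m' : Fin M, F S' (S' m'))| := by rw [hg]; ring_nf
      _ ≤ |(∫ o, F S o ∂μ) - (∫ o, F S' o ∂μ)|
          + |(1 / (M : ℝ)) * (∑ m' : Fin M, F S (S m'))
            - (1 / (M : ℝ)) * ∑ m' : Fin M, F S' (S' m')| := abs_sub _ _
      _ ≤ 2 * γ + (2 * γ + lam / M) := add_le_add hR hE
      _ = c := by rw [hc]; ring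
  -- integrability over the product space
  have hgint : Integrable g Pi := integrable_of_abs_le hgmeas.aestronglyMeasurable lam hgB
  set Eg := ∫ T, g T ∂Pi with hEg
  -- expectation bound: Eg ≤ 2γ
  have hFprod_int : Integrable (fun p : (Fin M → O) × O => F p.1 p.2) (Pi.prod μ) :=
    integrable_of_abs_le hF.aestronglyMeasurable lam
      (fun p => abs_le.2 ⟨by linarith [hF0 p.1 p.2], hFlam p.1 p.2⟩)
  have hER : ∫ S, (∫ o, F S o ∂μ) ∂Pi = ∫ p, F p.1 p.2 ∂(Pi.prod μ) :=
    (integral_prod _ hFprod_int).symm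
  have hFmint : ∀ m : Fin M, Integrable (fun S => F S (S m)) Pi := fun m =>
    integrable_of_abs_le (hFm m).aestronglyMeasurable lam
      (fun S => abs_le.2 ⟨by linarith [hF0 S (S m)], hFlam S (S m)⟩)
  have hkey : ∀ m : Fin M, (∫ S, (∫ o, F S o ∂μ) ∂Pi) - 2 * γ ≤ ∫ S, F S (S m) ∂Pi := by
    intro m
    have mp := measurePreserving_update μ (M := M) m
    have hTmeas := measurable_update_pair (O := O) (M := M) m
    have hcomp : ∫ S, F S (S m) ∂Pi
        = ∫ p : (Fin M → O) × O, F (Function.update p.1 m p.2) p.2 ∂(Pi.prod μ) := by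
      rw [hPi]
      conv_lhs => rw [← mp.map_eq]
      rw [integral_map hTmeas.aemeasurable (hFm m).aestronglyMeasurable]
      apply integral_congr_ae
      filter_upwards with p
      simp
    have hmeas2 : Measurable fun p : (Fin M → O) × O => F (Function.update p.1 m p.2) p.2 :=
      hF.comp (hTmeas.prodMk measurable_snd)
    have hint2 : Integrable (fun p : (Fin M → O) × O => F (Function.update p.1 m p.2) p.2)
        (Pi.prod μ) :=
      integrable_of_abs_le hmeas2.aestronglyMeasurable lam
        (fun p => abs_le.2 ⟨by linarith [hF0 (Function.update p.1 m p.2) p.2],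
          hFlam (Function.update p.1 m p.2) p.2⟩)
    have hdiffint : (∫ p : (Fin M → O) × O, F p.1 p.2 ∂(Pi.prod μ))
        - (∫ p : (Fin M → O) × O, F (Function.update p.1 m p.2) p.2 ∂(Pi.prod μ)) ≤ 2 * γ := by
      rw [← integral_sub hFprod_int hint2]
      calc ∫ p : (Fin M → O) × O, (F p.1 p.2 - F (Function.update p.1 m p.2) p.2) ∂(Pi.prod μ)
          ≤ ∫ _p : (Fin M → O) × O, 2 * γ ∂(Pi.prod μ) := by
            apply integral_mono (hFprod_int.sub hint2) (integrable_const _)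
            intro p
            exact le_trans (le_abs_self _) (hstab p.1 m p.2 p.2)
        _ = 2 * γ := by simp
    rw [hER, hcomp]
    linarith
  have hERemp : ∫ S, ((1 / (M : ℝ)) * ∑ m : Fin M, F S (S m)) ∂Pi
      = (1 / (M : ℝ)) * ∑ m : Fin M, ∫ S, F S (S m) ∂Pi := by
    rw [integral_const_mul, integral_finset_sum Finset.univ (fun m _ => hFmint m)]
  have hEgle : Eg ≤ 2 * γ := by
    have hRint : Integrable (fun S => ∫ o, F S o ∂μ) Pi :=
      integrable_of_abs_le hRmeas.aestronglyMeasurable lam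
        (fun S => abs_le.2 ⟨by linarith [(hRbd S).1], (hRbd S).2⟩)
    have hEint : Integrable (fun S => (1 / (M : ℝ)) * ∑ m : Fin M, F S (S m)) Pi :=
      integrable_of_abs_le hEmeas.aestronglyMeasurable lam
        (fun S => abs_le.2 ⟨by linarith [(hEbd S).1], (hEbd S).2⟩)
    have hEgeq : Eg = (∫ S, (∫ o, F S o ∂μ) ∂Pi)
        - ∫ S, ((1 / (M : ℝ)) * ∑ m : Fin M, F S (S m)) ∂Pi :=
      calc Eg = ∫ T, ((∫ o, F T o ∂μ) - (1 / (M : ℝ)) * ∑ m : Fin M, F T (T m)) ∂Pi := rfl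
        _ = _ := integral_sub hRint hEint
    have hsumlow : (M:ℝ) * ((∫ S, (∫ o, F S o ∂μ) ∂Pi) - 2 * γ)
        ≤ ∑ m : Fin M, ∫ S, F S (S m) ∂Pi := by
      calc (M:ℝ) * ((∫ S, (∫ o, F S o ∂μ) ∂Pi) - 2 * γ)
          = ∑ _m : Fin M, ((∫ S, (∫ o, F S o ∂μ) ∂Pi) - 2 * γ) := by simp [mul_comm]; ring
        _ ≤ ∑ m : Fin M, ∫ S, F S (S m) ∂Pi := Finset.sum_le_sum fun m _ => hkey m
    have hremplow : (∫ S, (∫ o, F S o ∂μ) ∂Pi) - 2 * γ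
        ≤ (1 / (M : ℝ)) * ∑ m : Fin M, ∫ S, F S (S m) ∂Pi := by

      have := mul_le_mul_of_nonneg_left hsumlow (by positivity : (0:ℝ) ≤ 1 / (M:ℝ))
      calc (∫ S, (∫ o, F S o ∂μ) ∂Pi) - 2 * γ
          = (1 / (M : ℝ)) * ((M:ℝ) * ((∫ S, (∫ o, F S o ∂μ) ∂Pi) - 2 * γ)) := by
            field_simp
        _ ≤ (1 / (M : ℝ)) * ∑ m : Fin M, ∫ S, F S (S m) ∂Pi := this
    rw [hEgeq, hERemp]
    linarith
  -- case split on c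
  rcases eq_or_lt_of_le hc0 with hceq | hcpos
  · -- degenerate case: γ = 0 and lam = 0, so F ≡ 0
    have hdM : 0 ≤ lam / (M:ℝ) := by positivity
    have hceq' : 4 * γ + lam / (M:ℝ) = 0 := by rw [← hc]; exact hceq.symm
    have hγ0 : γ = 0 := by linarith
    have hlamM : lam / (M:ℝ) = 0 := by linarith
    have hlam' : lam = 0 := by
      rcases div_eq_zero_iff.1 hlamM with h | h
      · exact h
      · exact absurd h (by positivity)
    have hFzero : ∀ S o, F S o = 0 := fun S o =>
      le_antisymm (hlam' ▸ hFlam S o) (hF0 S o)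
    have hset : {S : Fin M → O | (∫ o, F S o ∂μ) - (1 / (M : ℝ)) * ∑ m : Fin M, F S (S m)
        ≤ 2 * γ + (4 * M * γ + lam) * Real.sqrt (Real.log (1 / δ) / (2 * M))} = Set.univ := by
      apply Set.eq_univ_of_forall
      intro S
      simp only [Set.mem_setOf_eq, hFzero, hγ0, hlam']
      simp
    rw [hset, measure_univ]
    exact ENNReal.ofReal_le_one.2 (by linarith)
  · -- main case: c > 0
    set L := Real.log (1 / δ) with hL
    have hL0 : 0 ≤ L := Real.log_nonneg (by rw [le_div_iff₀ hδ0]; linarith)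
    set s := Real.sqrt (L / (2 * (M:ℝ))) with hs
    have hs0 : 0 ≤ s := Real.sqrt_nonneg _
    have hs2 : s ^ 2 = L / (2 * (M:ℝ)) := Real.sq_sqrt (by positivity)
    set t := (M:ℝ) * c * s with ht
    have ht0 : 0 ≤ t := by positivity
    set b := 4 * t / ((M:ℝ) * c ^ 2) with hb
    have hb0 : 0 ≤ b := by positivity
    have hXintexp : Integrable (fun S => exp (b * (g S - Eg))) Pi := by
      refine integrable_of_abs_le
        ((Real.measurable_exp.comp ((hgmeas.sub measurable_const).const_mul b)).aestronglyMeasurable)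
        (exp (b * (2 * lam))) (fun S => ?_)
      rw [abs_of_pos (exp_pos _)]
      apply exp_le_exp.2
      have hEgabs : |Eg| ≤ lam := by
        have := norm_integral_le_of_norm_le_const (μ := Pi) (f := g) (C := lam)
          (Filter.Eventually.of_forall fun T => by simpa using hgB T)
        simpa [hEg] using this
      calc b * (g S - Eg) ≤ |b * (g S - Eg)| := le_abs_self _
        _ = b * |g S - Eg| := by rw [abs_mul, abs_of_nonneg hb0]
        _ ≤ b * (2 * lam) := by
            apply mul_le_mul_of_nonneg_left _ hb0
            calc |g S - Eg| ≤ |g S| + |Eg| := abs_sub _ _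
              _ ≤ 2 * lam := by linarith [hgB S]
    have hmgfb : ∫ S, exp (b * (g S - Eg)) ∂Pi ≤ exp (b ^ 2 * (M:ℝ) * c ^ 2 / 8) :=
      mgf_pi_bound μ M c b lam g hgmeas hgB hgdiff
    have hchern := measure_ge_le_exp_mul_mgf (X := fun S => g S - Eg) (μ := Pi) t hb0 hXintexp
    have hmgf_eq : mgf (fun S => g S - Eg) Pi b = ∫ S, exp (b * (g S - Eg)) ∂Pi := rfl
    have hMc : (M:ℝ) * c = 4 * M * γ + lam := by rw [hc]; field_simp
    have ht2 : t ^ 2 = (M:ℝ) * c ^ 2 * L / 2 := by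
      rw [ht, mul_pow, mul_pow, hs2]
      field_simp
    have harith : -b * t + b ^ 2 * (M:ℝ) * c ^ 2 / 8 = -L := by
      have h1 : -b * t + b ^ 2 * (M:ℝ) * c ^ 2 / 8 = -(2 * t ^ 2) / ((M:ℝ) * c ^ 2) := by
        rw [hb]
        field_simp
        ring
      rw [h1, ht2]
      field_simp
    have hexpδ : exp (-b * t) * exp (b ^ 2 * (M:ℝ) * c ^ 2 / 8) = δ := by
      rw [← Real.exp_add, harith, hL, one_div, Real.log_inv, neg_neg, Real.exp_log hδ0]
    have htoReal : (Pi {S | t ≤ g S - Eg}).toReal ≤ δ := by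
      calc (Pi {S | t ≤ g S - Eg}).toReal
          ≤ exp (-b * t) * mgf (fun S => g S - Eg) Pi b := hchern
        _ ≤ exp (-b * t) * exp (b ^ 2 * (M:ℝ) * c ^ 2 / 8) := by
            rw [hmgf_eq]
            exact mul_le_mul_of_nonneg_left hmgfb (exp_pos _).le
        _ = δ := hexpδ
    have hPA : Pi {S | t ≤ g S - Eg} ≤ ENNReal.ofReal δ :=
      (ENNReal.le_ofReal_iff_toReal_le (measure_ne_top _ _) hδ0.le).2 htoReal
    have hA : MeasurableSet {S : Fin M → O | t ≤ g S - Eg} :=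
      measurableSet_le measurable_const (hgmeas.sub measurable_const)
    have hsub : {S : Fin M → O | t ≤ g S - Eg}ᶜ ⊆
        {S : Fin M → O | (∫ o, F S o ∂μ) - (1 / (M : ℝ)) * ∑ m : Fin M, F S (S m)
            ≤ 2 * γ + (4 * M * γ + lam) * s} := by
      intro S hS
      simp only [Set.mem_compl_iff, Set.mem_setOf_eq, not_le] at hS
      simp only [Set.mem_setOf_eq]
      have hgt : g S < Eg + t := by linarith
      have : (4 * (M:ℝ) * γ + lam) * s = t := by rw [← hMc, ht]
      rw [this]
      have : g S ≤ 2 * γ + t := by linarith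
      exact this
    calc ENNReal.ofReal (1 - δ) = ENNReal.ofReal 1 - ENNReal.ofReal δ :=
        ENNReal.ofReal_sub 1 hδ0.le
      _ = Pi Set.univ - ENNReal.ofReal δ := by rw [ENNReal.ofReal_one, measure_univ]
      _ ≤ Pi Set.univ - Pi {S | t ≤ g S - Eg} := tsub_le_tsub_left hPA _
      _ = Pi {S : Fin M → O | t ≤ g S - Eg}ᶜ := (measure_compl hA (measure_ne_top _ _)).symm
      _ ≤ _ := measure_mono hsub
end

section
/- Let F be 2γ-replacement-stable and satisfy 0 ≤ F(S,o) ≤ λ for all S ∈ O^M and o ∈ O, and define the gap K(S) = R(S) − R_emp(S). Then K has bounded differences with constant 4γ + λ/M: for every S ∈ O^M, every m ∈ {1,…,M} and every o' ∈ O, |K(S) − K(S^{m←o'})| ≤ 4γ + λ/M. -/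
open MeasureTheory

/-- the generalization gap `K(S) = R(S) - R_emp(S)` of a 2γ-replacement-stable,
bounded expected-loss function has bounded differences with constant `4γ + λ/M`. -/
theorem gap_bounded_differences
    {O : Type*} [MeasurableSpace O] (μ : Measure O) [IsProbabilityMeasure μ]
    (M : ℕ) (hM : 1 ≤ M)
    (F : (Fin M → O) → O → ℝ) (hF : Measurable (Function.uncurry F))
    (γ lam : ℝ) (hγ : 0 ≤ γ)
    (hstab : ∀ (S : Fin M → O) (m : Fin M) (o' o : O),
      |F S o - F (Function.update S m o') o| ≤ 2 * γ)
    (hF0 : ∀ S o, 0 ≤ F S o) (hFlam : ∀ S o, F S o ≤ lam)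
    (S : Fin M → O) (m : Fin M) (o' : O) :
    |(((∫ o, F S o ∂μ) - (1 / (M : ℝ)) * ∑ i : Fin M, F S (S i)) -
        ((∫ o, F (Function.update S m o') o ∂μ) -
          (1 / (M : ℝ)) *
            ∑ i : Fin M, F (Function.update S m o') (Function.update S m o' i)))|
      ≤ 4 * γ + lam / M := by
  set S' := Function.update S m o' with hS'
  have hMpos : (0:ℝ) < M := by exact_mod_cast Nat.lt_of_lt_of_le Nat.zero_lt_one hM
  have hlam0 : 0 ≤ lam := le_trans (hF0 S (S m)) (hFlam S (S m))
  -- measurability and integrability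
  have meas : ∀ T : Fin M → O, Measurable (fun o => F T o) := fun T =>
    hF.comp (measurable_const.prodMk measurable_id)
  have integ : ∀ T : Fin M → O, Integrable (fun o => F T o) μ := by
    intro T
    refine ⟨(meas T).aestronglyMeasurable, ?_⟩
    apply MeasureTheory.HasFiniteIntegral.of_bounded (C := lam)
    filter_upwards with o
    rw [Real.norm_eq_abs, abs_of_nonneg (hF0 T o)]
    exact hFlam T o
  -- bound the integral part
  have hint : |(∫ o, F S o ∂μ) - (∫ o, F S' o ∂μ)| ≤ 2 * γ := by
    rw [← integral_sub (integ S) (integ S')]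
    have := norm_integral_le_of_norm_le_const (μ := μ)
      (f := fun o => F S o - F S' o) (C := 2 * γ)
      (by filter_upwards with o; rw [Real.norm_eq_abs]; exact hstab S m o' o)
    simpa using this
  -- bound the empirical part
  have hsum : |∑ i : Fin M, F S (S i) - ∑ i : Fin M, F S' (S' i)|
      ≤ 2 * γ * M + lam := by
    rw [← Finset.sum_sub_distrib]
    calc |∑ i : Fin M, (F S (S i) - F S' (S' i))|
        ≤ ∑ i : Fin M, |F S (S i) - F S' (S' i)| := Finset.abs_sum_le_sum_abs _ _
      _ ≤ ∑ i : Fin M, (if i = m then lam + 2 * γ else 2 * γ) := by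
          apply Finset.sum_le_sum
          intro i _
          by_cases hi : i = m
          · subst hi
            simp only [if_pos rfl]
            have h1 : |F S (S i) - F S' (S i)| ≤ 2 * γ := hstab S i o' (S i)
            have h2 : |F S' (S i) - F S' (S' i)| ≤ lam := by
              rw [abs_sub_le_iff]
              constructor
              · linarith [hFlam S' (S i), hF0 S' (S' i)]
              · linarith [hFlam S' (S' i), hF0 S' (S i)]
            calc |F S (S i) - F S' (S' i)|
                ≤ |F S (S i) - F S' (S i)| + |F S' (S i) - F S' (S' i)| :=
                  abs_sub_le _ _ _
              _ ≤ lam + 2 * γ := by linarith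
          · simp only [if_neg hi]
            have : S' i = S i := Function.update_of_ne hi o' S
            rw [this]
            exact hstab S m o' (S i)
      _ = ∑ i : Fin M, (2 * γ + if i = m then lam else 0) := by
          apply Finset.sum_congr rfl
          intro i _
          by_cases hi : i = m <;> simp [hi, add_comm]
      _ ≤ 2 * γ * M + lam := by
          rw [Finset.sum_add_distrib, Finset.sum_ite_eq' Finset.univ m]
          simp [Finset.card_univ, mul_comm]
          try ring_nf
          try linarith
  have hemp : |(1 / (M : ℝ)) * ∑ i : Fin M, F S (S i)
      - (1 / (M : ℝ)) * ∑ i : Fin M, F S' (S' i)| ≤ 2 * γ + lam / M := by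
    rw [← mul_sub, abs_mul, abs_of_nonneg (by positivity : (0:ℝ) ≤ 1 / (M:ℝ))]
    calc (1 / (M:ℝ)) * |∑ i : Fin M, F S (S i) - ∑ i : Fin M, F S' (S' i)|
        ≤ (1 / (M:ℝ)) * (2 * γ * M + lam) := by
          apply mul_le_mul_of_nonneg_left hsum (by positivity)
      _ = 2 * γ + lam / M := by field_simp
  calc |(((∫ o, F S o ∂μ) - (1 / (M : ℝ)) * ∑ i : Fin M, F S (S i)) -
        ((∫ o, F S' o ∂μ) - (1 / (M : ℝ)) * ∑ i : Fin M, F S' (S' i)))|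
      = |((∫ o, F S o ∂μ) - (∫ o, F S' o ∂μ)) -
          ((1 / (M : ℝ)) * ∑ i : Fin M, F S (S i)
            - (1 / (M : ℝ)) * ∑ i : Fin M, F S' (S' i))| := by ring_nf
    _ ≤ |(∫ o, F S o ∂μ) - (∫ o, F S' o ∂μ)| +
        |(1 / (M : ℝ)) * ∑ i : Fin M, F S (S i)
          - (1 / (M : ℝ)) * ∑ i : Fin M, F S' (S' i)| := abs_sub _ _
    _ ≤ 4 * γ + lam / M := by linarith
end
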